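/- Let N ≥ 1, 2 < q ≤ p̄ = 2+4/N, 0 < a ≤ ā_N and μ < 0. If u ∈ H¹(ℝ^N) with |u|₂ = a solves −Δu = λu + μ|u|^{q−2}u + |u|^{p̄−2}u for some λ ∈ ℝ, and u satisfies the Pohozaev identity P_μ(u) = |∇u|₂² − (2/p̄)|u|_{p̄}^{p̄} − μγ_q|u|_q^q = 0, then a contradiction arises; i.e., no such solution exists. More precisely: P_μ(u) = 0 combined with inf_{S_a} E_0 ≥ 0 forces 0 > μγ_q|u|_q^q = 2E_0(u) ≥ 0. -/
import Mathlib


/-- Nonexistence for `0 < a ≤ ā_N`, `μ < 0`, `2 < q ≤ p̄ = 2+4/N`: if `u ∈ S_a` solves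
the stationary equation, hence satisfies the Pohozaev identity
`|∇u|₂² − (2/p̄)|u|_{p̄}^{p̄} − μγ_q|u|_q^q = 0`, and `inf_{S_a} E₀ ≥ 0`
(so `E₀(u) ≥ 0`), then a contradiction arises: `0 > μγ_q|u|_q^q = 2E₀(u) ≥ 0`.
Here `G2 = |∇u|₂² ≥ 0`, `Qq = |u|_q^q > 0`, `Pp = |u|_{p̄}^{p̄} ≥ 0`. -/
theorem stmt12 (N : ℕ) (hN : 1 ≤ N) (q a μ pbar γq : ℝ)
    (hpbar : pbar = 2 + 4 / (N : ℝ)) (hγq : γq = (N : ℝ) * (q - 2) / (2 * q))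
    (hq : 2 < q) (hqp : q ≤ pbar) (ha : 0 < a) (hμ : μ < 0)
    (G2 Qq Pp E0 : ℝ)
    (hG2 : 0 ≤ G2) (hQq : 0 < Qq) (hPp : 0 ≤ Pp)
    (hE0 : E0 = G2 / 2 - Pp / pbar)
    (hPoh : G2 - (2 / pbar) * Pp - μ * γq * Qq = 0)
    (hinf : 0 ≤ E0) :
    False := by
  have hNpos : (0:ℝ) < N := by exact_mod_cast hN
  have hγpos : 0 < γq := by
    rw [hγq]
    apply div_pos (mul_pos hNpos (by linarith)) (by linarith)
  have hneg : μ * γq * Qq < 0 := by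
    have := mul_pos hγpos hQq
    nlinarith
  have : μ * γq * Qq = 2 * E0 := by
    rw [hE0]
    linear_combination -hPoh
  nlinarith
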